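/- Fix an integer M ≥ 2, layer sizes H_0, …, H_M ≥ 1, inputs X₁, …, X_n ∈ ℝ^N with at least one X_k nonzero, and targets Y₁, …, Y_n ∈ ℝ^{N'}. Let L_n(w) = (1/n) Σ_i ‖Y_i − f(X_i; w)‖², and for constants n, β > 0, γ > 0 and a fixed w_μ ∈ ℝ^d define the log tempered posterior (up to an additive constant) log π(w) = −nβ L_n(w) − (γ/2)‖w − w_μ‖². Then there is no constant α > 0 such that ‖∇log π(w₁) − ∇log π(w₂)‖ ≤ α‖w₁ − w₂‖ for all w₁, w₂ ∈ ℝ^d; in particular ∇L_n is not globally Lipschitz. -/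

import Mathlib

/-- The end-to-end matrix `W_M ⋯ W_1` of a deep linear network with layer sizes
`H 0, H 1, …` and weight matrices `w l : Matrix (Fin (H (l+1))) (Fin (H l)) ℝ`. -/
def dlnProd (H : ℕ → ℕ) (w : ∀ l : ℕ, Matrix (Fin (H (l + 1))) (Fin (H l)) ℝ) :
    (M : ℕ) → Matrix (Fin (H M)) (Fin (H 0)) ℝ
  | 0 => 1
  | M + 1 => w M * dlnProd H w M

/-- Index type for the `d = Σ_{l=1}^M H_l H_{l-1}` matrix entries of the parameter
`w = (W_1, …, W_M)`, so that the parameter space is `ℝ^d = EuclideanSpace ℝ (DlnVars H M)`. -/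
abbrev DlnVars (H : ℕ → ℕ) (M : ℕ) := (l : Fin M) × (Fin (H (l.1 + 1)) × Fin (H l.1))

/-- Reassemble a parameter vector `w ∈ ℝ^d` into the tuple of weight matrices. -/
def dlnToMats (M : ℕ) (H : ℕ → ℕ) (w : DlnVars H M → ℝ) :
    ∀ l : ℕ, Matrix (Fin (H (l + 1))) (Fin (H l)) ℝ :=
  fun l => Matrix.of fun i j => if h : l < M then w ⟨⟨l, h⟩, (i, j)⟩ else 0

/-- The empirical loss `L_n(w) = (1/n) Σ_k ‖Y_k − f(X_k; w)‖²` of a deep linear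
network, as a function on the parameter space `ℝ^d`. -/
noncomputable def dlnEmpLoss (M : ℕ) (H : ℕ → ℕ) (n : ℕ)
    (X : Fin n → Fin (H 0) → ℝ) (Y : Fin n → Fin (H M) → ℝ)
    (w : EuclideanSpace ℝ (DlnVars H M)) : ℝ :=
  (1 / (n : ℝ)) * ∑ k : Fin n, ∑ i : Fin (H M),
    (Y k i - (dlnProd H (dlnToMats M H (fun v => w v)) M).mulVec (X k) i) ^ 2

/-- The log tempered posterior (up to an additive constant)
`log π(w) = −nβ L_n(w) − (γ/2)‖w − w_μ‖²` with Gaussian localization prior. -/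
noncomputable def dlnLogPost (M : ℕ) (H : ℕ → ℕ) (n : ℕ)
    (X : Fin n → Fin (H 0) → ℝ) (Y : Fin n → Fin (H M) → ℝ) (β γ : ℝ)
    (wμ : EuclideanSpace ℝ (DlnVars H M)) (w : EuclideanSpace ℝ (DlnVars H M)) : ℝ :=
  -((n : ℝ) * β) * dlnEmpLoss M H n X Y w - (γ / 2) * ‖w - wμ‖ ^ 2

lemma dln_superlin (Mn : ℕ) (hM : 2 ≤ Mn) (a b c d : ℝ) (ha : a ≠ 0) (C D : ℝ) :
    ∃ t : ℝ, 0 ≤ t ∧ C + D * t <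
      |(2 * Mn) * a * t ^ (2 * Mn - 1) + (Mn : ℝ) * b * t ^ (Mn - 1) + 2 * c * t + d| := by
  set K : ℝ := (Mn : ℝ) * |b| + 2 * |c| + |d| with hK
  have hMpos : (0:ℝ) < Mn := by positivity
  have h2a : 0 < 2 * (Mn : ℝ) * |a| := by positivity
  set t : ℝ := max 1 ((K + |C| + |D| + 1) / (2 * Mn * |a|)) with ht
  have ht1 : (1:ℝ) ≤ t := le_max_left _ _
  have ht0 : (0:ℝ) ≤ t := by linarith
  have htK : K + |C| + |D| + 1 ≤ 2 * Mn * |a| * t := by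
    rw [mul_comm]
    exact (div_le_iff₀ h2a).mp (le_max_right _ _)
  refine ⟨t, ht0, ?_⟩
  set u : ℝ := t ^ (2 * Mn - 2) with hu
  have p1 : t ^ (Mn - 1) ≤ u := pow_le_pow_right₀ ht1 (by omega)
  have p2 : t ≤ u := by
    calc t = t ^ 1 := (pow_one t).symm
    _ ≤ u := pow_le_pow_right₀ ht1 (by omega)
  have p3 : (1:ℝ) ≤ u := by
    calc (1:ℝ) = 1 ^ (2 * Mn - 2) := (one_pow _).symm
    _ ≤ u := pow_le_pow_left₀ (by norm_num) ht1 _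
  have p0 : (0:ℝ) ≤ u := by linarith
  have key : (2 * (Mn:ℝ)) * |a| * t ^ (2 * Mn - 1) = (2 * Mn * |a| * t) * u := by
    have e2 : 2 * Mn - 1 = (2 * Mn - 2) + 1 := by omega
    rw [hu, e2, pow_succ]; ring
  have h2 : |(Mn : ℝ) * b * t ^ (Mn - 1) + 2 * c * t + d| ≤ K * u := by
    calc |(Mn : ℝ) * b * t ^ (Mn - 1) + 2 * c * t + d|
        ≤ |(Mn : ℝ) * b * t ^ (Mn - 1)| + |2 * c * t| + |d| :=
          (abs_add_le _ _).trans (by gcongr; exact abs_add_le _ _)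
      _ = (Mn : ℝ) * |b| * t ^ (Mn - 1) + 2 * |c| * t + |d| := by
          rw [abs_mul, abs_mul, abs_mul, abs_mul, abs_of_nonneg ht0,
            abs_of_nonneg (pow_nonneg ht0 _), Nat.abs_cast, abs_two]
      _ ≤ (Mn : ℝ) * |b| * u + 2 * |c| * u + |d| * u := by
          have g1 : (Mn : ℝ) * |b| * t ^ (Mn - 1) ≤ (Mn : ℝ) * |b| * u :=
            mul_le_mul_of_nonneg_left p1 (by positivity)
          have g2 : 2 * |c| * t ≤ 2 * |c| * u :=
            mul_le_mul_of_nonneg_left p2 (by positivity)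
          have g3 : |d| ≤ |d| * u := le_mul_of_one_le_right (abs_nonneg d) p3
          linarith
      _ = K * u := by rw [hK]; ring
  have h3 : |(2 * (Mn:ℝ)) * a * t ^ (2 * Mn - 1)| = 2 * Mn * |a| * t ^ (2 * Mn - 1) := by
    rw [abs_mul, abs_mul, abs_of_nonneg (pow_nonneg ht0 _),
      abs_of_nonneg (show (0:ℝ) ≤ 2 * Mn by positivity)]
  have h1 : |(2 * (Mn:ℝ)) * a * t ^ (2 * Mn - 1)|
      - |(Mn : ℝ) * b * t ^ (Mn - 1) + 2 * c * t + d|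
      ≤ |(2 * Mn) * a * t ^ (2 * Mn - 1) + (Mn : ℝ) * b * t ^ (Mn - 1) + 2 * c * t + d| := by
    have := abs_sub_abs_le_abs_sub ((2 * (Mn:ℝ)) * a * t ^ (2 * Mn - 1))
      (-((Mn : ℝ) * b * t ^ (Mn - 1) + 2 * c * t + d))
    simp only [abs_neg, sub_neg_eq_add] at this
    calc |(2 * (Mn:ℝ)) * a * t ^ (2 * Mn - 1)|
        - |(Mn : ℝ) * b * t ^ (Mn - 1) + 2 * c * t + d|
        ≤ |(2 * (Mn:ℝ)) * a * t ^ (2 * Mn - 1) +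
            ((Mn : ℝ) * b * t ^ (Mn - 1) + 2 * c * t + d)| := by linarith
      _ = _ := by ring_nf
  have hCD : C + D * t ≤ (|C| + |D|) * u := by
    have hC : C ≤ |C| * u := (le_abs_self C).trans (le_mul_of_one_le_right (abs_nonneg C) p3)
    have hD : D * t ≤ |D| * u := by
      calc D * t ≤ |D| * t := mul_le_mul_of_nonneg_right (le_abs_self D) ht0
        _ ≤ |D| * u := mul_le_mul_of_nonneg_left p2 (abs_nonneg D)
    linarith
  have final : (|C| + |D|) * u < (2 * (Mn:ℝ) * |a| * t - K) * u := by
    apply mul_lt_mul_of_pos_right _ (by linarith)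
    linarith
  have : (2 * (Mn:ℝ) * |a| * t - K) * u
      ≤ |(2 * Mn) * a * t ^ (2 * Mn - 1) + (Mn : ℝ) * b * t ^ (Mn - 1) + 2 * c * t + d| := by
    rw [sub_mul, ← key, ← h3]
    linarith
  linarith

open RealInnerProductSpace

lemma dln_not_lip {ι : Type*} [Fintype ι] (f : EuclideanSpace ℝ ι → ℝ)
    (hf : Differentiable ℝ f) (e : EuclideanSpace ℝ ι) (Mn : ℕ) (hM : 2 ≤ Mn)
    (a b c d e0 : ℝ) (ha : a ≠ 0)
    (hp : ∀ t : ℝ, f (t • e) = a * t ^ (2 * Mn) + b * t ^ Mn + c * t ^ 2 + d * t + e0) :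
    ¬ ∃ α : ℝ, 0 < α ∧ ∀ w₁ w₂ : EuclideanSpace ℝ ι,
      ‖gradient f w₁ - gradient f w₂‖ ≤ α * ‖w₁ - w₂‖ := by
  rintro ⟨α, hα, hlip⟩
  obtain ⟨t, ht0, hlt⟩ := dln_superlin Mn hM a b c d ha (‖gradient f 0‖ * ‖e‖) (α * ‖e‖ ^ 2)
  -- chain rule along the line s ↦ s • e
  have hline : HasDerivAt (fun s : ℝ => s • e) e t := by
    simpa using (hasDerivAt_id t).smul_const e
  have hcomp : HasDerivAt (fun s : ℝ => f (s • e)) ⟪gradient f (t • e), e⟫ t := by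
    have hfd : HasFDerivAt f (InnerProductSpace.toDual ℝ _ (gradient f (t • e))) (t • e) :=
      ((hf (t • e)).hasGradientAt).hasFDerivAt
    have h2 := hfd.comp_hasDerivAt t hline
    rw [InnerProductSpace.toDual_apply_apply] at h2
    exact h2
  -- the polynomial derivative
  have hpol : HasDerivAt (fun s : ℝ => a * s ^ (2 * Mn) + b * s ^ Mn + c * s ^ 2 + d * s + e0)
      ((2 * Mn) * a * t ^ (2 * Mn - 1) + (Mn : ℝ) * b * t ^ (Mn - 1) + 2 * c * t + d) t := by
    have h1 := ((hasDerivAt_pow (2 * Mn) t).const_mul a)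
    have h2 := ((hasDerivAt_pow Mn t).const_mul b)
    have h3 := ((hasDerivAt_pow 2 t).const_mul c)
    have h4 := (hasDerivAt_id t).const_mul d
    have := (((h1.add h2).add h3).add h4).add_const e0
    refine this.congr_deriv ?_
    push_cast
    ring
  have heq : (fun s : ℝ => f (s • e)) =
      fun s : ℝ => a * s ^ (2 * Mn) + b * s ^ Mn + c * s ^ 2 + d * s + e0 := funext hp
  rw [heq] at hcomp
  have hder : ⟪gradient f (t • e), e⟫ =
      (2 * Mn) * a * t ^ (2 * Mn - 1) + (Mn : ℝ) * b * t ^ (Mn - 1) + 2 * c * t + d :=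
    hcomp.unique hpol
  -- bound the inner product using the Lipschitz hypothesis
  have hnorm : ‖gradient f (t • e)‖ ≤ ‖gradient f 0‖ + α * (t * ‖e‖) := by
    have h := hlip (t • e) 0
    rw [sub_zero, norm_smul, Real.norm_eq_abs, abs_of_nonneg ht0] at h
    have := norm_sub_norm_le (gradient f (t • e)) (gradient f 0)
    linarith
  have hbound : |⟪gradient f (t • e), e⟫| ≤ ‖gradient f 0‖ * ‖e‖ + α * ‖e‖ ^ 2 * t := by
    calc |⟪gradient f (t • e), e⟫| ≤ ‖gradient f (t • e)‖ * ‖e‖ := abs_real_inner_le_norm _ _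
      _ ≤ (‖gradient f 0‖ + α * (t * ‖e‖)) * ‖e‖ :=
          mul_le_mul_of_nonneg_right hnorm (norm_nonneg e)
      _ = ‖gradient f 0‖ * ‖e‖ + α * ‖e‖ ^ 2 * t := by ring
  rw [hder] at hbound
  linarith



lemma dlnProd_entry_diff (M : ℕ) (H : ℕ → ℕ) (L : ℕ) (i : Fin (H L)) (j : Fin (H 0)) :
    Differentiable ℝ (fun w : EuclideanSpace ℝ (DlnVars H M) =>
      dlnProd H (dlnToMats M H (fun v => w v)) L i j) := by
  induction L with
  | zero =>
    simp only [dlnProd]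
    exact differentiable_const _
  | succ L ih =>
    simp only [dlnProd, Matrix.mul_apply]
    apply Differentiable.fun_sum
    intro k _
    apply Differentiable.mul _ (ih k)
    simp only [dlnToMats, Matrix.of_apply]
    by_cases h : L < M
    · simp only [dif_pos h]
      exact (EuclideanSpace.proj (𝕜 := ℝ) (⟨⟨L, h⟩, (i, k)⟩ : DlnVars H M)).differentiable
    · simp only [dif_neg h]
      exact differentiable_const _

lemma dlnEmpLoss_diff (M : ℕ) (H : ℕ → ℕ) (n : ℕ)
    (X : Fin n → Fin (H 0) → ℝ) (Y : Fin n → Fin (H M) → ℝ) :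
    Differentiable ℝ (dlnEmpLoss M H n X Y) := by
  unfold dlnEmpLoss
  apply Differentiable.const_mul
  apply Differentiable.fun_sum; intro k _
  apply Differentiable.fun_sum; intro i _
  apply Differentiable.pow
  apply Differentiable.const_sub
  simp only [Matrix.mulVec, dotProduct]
  apply Differentiable.fun_sum; intro j _
  exact (dlnProd_entry_diff M H M i j).mul_const _

lemma dlnLogPost_diff (M : ℕ) (H : ℕ → ℕ) (n : ℕ)
    (X : Fin n → Fin (H 0) → ℝ) (Y : Fin n → Fin (H M) → ℝ) (β γ : ℝ)
    (wμ : EuclideanSpace ℝ (DlnVars H M)) :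
    Differentiable ℝ (dlnLogPost M H n X Y β γ wμ) := by
  unfold dlnLogPost
  apply Differentiable.sub
  · exact (dlnEmpLoss_diff M H n X Y).const_mul _
  · apply Differentiable.const_mul
    have : (fun w : EuclideanSpace ℝ (DlnVars H M) => ‖w - wμ‖ ^ 2)
        = fun w => ⟪w - wμ, w - wμ⟫ := by
      funext w
      rw [real_inner_self_eq_norm_sq]
    rw [this]
    exact (differentiable_id.sub_const wμ).inner ℝ (differentiable_id.sub_const wμ)

lemma dlnProd_line (M : ℕ) (hM : 1 ≤ M) (H : ℕ → ℕ) (hH : ∀ l ≤ M, 1 ≤ H l)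
    (j₀ : Fin (H 0)) (t : ℝ) (e : DlnVars H M → ℝ)
    (he : ∀ v : DlnVars H M, e v = (if v.2.1.1 = 0 then 1 else 0) *
        (if v.1.1 = 0 then (if v.2.2.1 = j₀.1 then 1 else 0)
          else (if v.2.2.1 = 0 then 1 else 0)))
    (L : ℕ) (hL1 : 1 ≤ L) (hLM : L ≤ M) (i : Fin (H L)) (j : Fin (H 0)) :
    dlnProd H (dlnToMats M H (fun v => t * e v)) L i j
      = t ^ L * (if i.1 = 0 then 1 else 0) * (if j.1 = j₀.1 then 1 else 0) := by
  induction L with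
  | zero => omega
  | succ L ih =>
    rcases Nat.eq_zero_or_pos L with h0 | hpos
    · subst h0
      have h0M : 0 < M := hM
      simp only [dlnProd, Matrix.mul_one, dlnToMats, Matrix.of_apply, dif_pos h0M, he]
      simp only [if_true, pow_succ, pow_zero, one_mul]
      ring
    · have hLM' : L < M := Nat.lt_of_lt_of_le (Nat.lt_succ_self L) hLM
      have hHL : 0 < H L := hH L (by omega)
      have hLne : L ≠ 0 := Nat.pos_iff_ne_zero.mp hpos
      simp only [dlnProd, Matrix.mul_apply]
      have hterm : ∀ k : Fin (H L), dlnToMats M H (fun v => t * e v) L i k *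
          dlnProd H (dlnToMats M H (fun v => t * e v)) L k j
          = if k = (⟨0, hHL⟩ : Fin (H L)) then
              t ^ (L + 1) * (if i.1 = 0 then 1 else 0) * (if j.1 = j₀.1 then 1 else 0)
            else 0 := by
        intro k
        rw [ih hpos (by omega) k]
        simp only [dlnToMats, Matrix.of_apply, dif_pos hLM', he]
        by_cases hk : k = ⟨0, hHL⟩
        · subst hk
          simp only [if_pos rfl, if_neg hLne, pow_succ, if_true]
          ring
        · have hk' : k.1 ≠ 0 := fun h => hk (Fin.ext h)
          simp [hk', if_neg hk]
      rw [Finset.sum_congr rfl (fun k _ => hterm k), Finset.sum_ite_eq' Finset.univ]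
      simp

lemma dlnMulVec_line (M : ℕ) (hM : 1 ≤ M) (H : ℕ → ℕ) (hH : ∀ l ≤ M, 1 ≤ H l)
    (j₀ : Fin (H 0)) (t : ℝ) (e : DlnVars H M → ℝ)
    (he : ∀ v : DlnVars H M, e v = (if v.2.1.1 = 0 then 1 else 0) *
        (if v.1.1 = 0 then (if v.2.2.1 = j₀.1 then 1 else 0)
          else (if v.2.2.1 = 0 then 1 else 0)))
    (x : Fin (H 0) → ℝ) (i : Fin (H M)) :
    (dlnProd H (dlnToMats M H (fun v => t * e v)) M).mulVec x i
      = t ^ M * (if i.1 = 0 then 1 else 0) * x j₀ := by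
  simp only [Matrix.mulVec, dotProduct]
  have hterm : ∀ j : Fin (H 0),
      dlnProd H (dlnToMats M H (fun v => t * e v)) M i j * x j
      = if j = j₀ then t ^ M * (if i.1 = 0 then 1 else 0) * x j₀ else 0 := by
    intro j
    rw [dlnProd_line M hM H hH j₀ t e he M hM le_rfl i j]
    by_cases hj : j = j₀
    · subst hj; simp
    · have hj' : j.1 ≠ j₀.1 := fun h => hj (Fin.ext h)
      simp [hj', hj]
  rw [Finset.sum_congr rfl (fun j _ => hterm j), Finset.sum_ite_eq' Finset.univ]
  simp

lemma dln_sum_expand {ι : Type*} (s : Finset ι) (f g h : ι → ℝ) (u v : ℝ) :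
    ∑ x ∈ s, (f x * u + g x * v + h x)
      = (∑ x ∈ s, f x) * u + (∑ x ∈ s, g x) * v + ∑ x ∈ s, h x := by
  simp [Finset.sum_add_distrib, Finset.sum_mul]

lemma dlnEmpLoss_line (M : ℕ) (hM : 1 ≤ M) (H : ℕ → ℕ) (hH : ∀ l ≤ M, 1 ≤ H l)
    (n : ℕ) (X : Fin n → Fin (H 0) → ℝ) (Y : Fin n → Fin (H M) → ℝ)
    (j₀ : Fin (H 0)) (e : EuclideanSpace ℝ (DlnVars H M))
    (he : ∀ v : DlnVars H M, e v = (if v.2.1.1 = 0 then 1 else 0) *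
        (if v.1.1 = 0 then (if v.2.2.1 = j₀.1 then 1 else 0)
          else (if v.2.2.1 = 0 then 1 else 0)))
    (t : ℝ) :
    dlnEmpLoss M H n X Y (t • e)
      = ((1 / (n : ℝ)) * ∑ k, ∑ i : Fin (H M),
            ((if (i : ℕ) = 0 then (1:ℝ) else 0) * X k j₀) ^ 2) * t ^ (2 * M)
        + ((1 / (n : ℝ)) * ∑ k, ∑ i : Fin (H M),
            (-2 * Y k i * ((if (i : ℕ) = 0 then (1:ℝ) else 0) * X k j₀))) * t ^ M
        + 0 * t ^ 2 + 0 * t + (1 / (n : ℝ)) * ∑ k, ∑ i : Fin (H M), (Y k i) ^ 2 := by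
  unfold dlnEmpLoss
  have hsm : (fun v => (t • e) v) = fun v : DlnVars H M => t * e v := by
    funext v
    simp [PiLp.smul_apply, smul_eq_mul]
  rw [hsm]
  simp only [dlnMulVec_line M hM H hH j₀ t (fun v => e v) he]
  have expand : ∀ (k : Fin n) (i : Fin (H M)),
      (Y k i - t ^ M * (if (i : ℕ) = 0 then (1:ℝ) else 0) * X k j₀) ^ 2
      = ((if (i : ℕ) = 0 then (1:ℝ) else 0) * X k j₀) ^ 2 * t ^ (2 * M)
        + (-2 * Y k i * ((if (i : ℕ) = 0 then (1:ℝ) else 0) * X k j₀)) * t ^ M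
        + (Y k i) ^ 2 := by
    intro k i
    have h2M : t ^ (2 * M) = t ^ M * t ^ M := by rw [two_mul, pow_add]
    rw [h2M]; ring
  calc (1 / (n : ℝ)) * ∑ k, ∑ i : Fin (H M),
        (Y k i - t ^ M * (if (i : ℕ) = 0 then (1:ℝ) else 0) * X k j₀) ^ 2
      = (1 / (n : ℝ)) * ∑ k, (
          (∑ i : Fin (H M), ((if (i : ℕ) = 0 then (1:ℝ) else 0) * X k j₀) ^ 2) * t ^ (2 * M)
          + (∑ i : Fin (H M), (-2 * Y k i * ((if (i : ℕ) = 0 then (1:ℝ) else 0) * X k j₀))) * t ^ M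
          + ∑ i : Fin (H M), (Y k i) ^ 2) := by
        congr 1
        refine Finset.sum_congr rfl fun k _ => ?_
        rw [Finset.sum_congr rfl fun i _ => expand k i]
        exact dln_sum_expand _ _ _ _ _ _
    _ = _ := by
        rw [dln_sum_expand]
        ring

/-- for a deep linear network with `M ≥ 2` layers (and some nonzero
input), the gradient of the log tempered posterior is not globally Lipschitz; in
particular `∇L_n` is not globally Lipschitz. -/
theorem dln_logPost_gradient_not_lipschitz
    (M : ℕ) (hM : 2 ≤ M) (H : ℕ → ℕ) (hH : ∀ l ≤ M, 1 ≤ H l)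
    (n : ℕ) (hn : 0 < n) (β γ : ℝ) (hβ : 0 < β) (hγ : 0 < γ)
    (X : Fin n → Fin (H 0) → ℝ) (hX : ∃ k, X k ≠ 0)
    (Y : Fin n → Fin (H M) → ℝ)
    (wμ : EuclideanSpace ℝ (DlnVars H M)) :
    (¬ ∃ α : ℝ, 0 < α ∧ ∀ w₁ w₂ : EuclideanSpace ℝ (DlnVars H M),
        ‖gradient (dlnLogPost M H n X Y β γ wμ) w₁
          - gradient (dlnLogPost M H n X Y β γ wμ) w₂‖ ≤ α * ‖w₁ - w₂‖)
    ∧ (¬ ∃ α : ℝ, 0 < α ∧ ∀ w₁ w₂ : EuclideanSpace ℝ (DlnVars H M),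
        ‖gradient (dlnEmpLoss M H n X Y) w₁
          - gradient (dlnEmpLoss M H n X Y) w₂‖ ≤ α * ‖w₁ - w₂‖) := by
  obtain ⟨k₀, hk₀⟩ := hX
  obtain ⟨j₀, hj₀⟩ := Function.ne_iff.mp hk₀
  have hj₀' : X k₀ j₀ ≠ 0 := hj₀
  have hM1 : 1 ≤ M := by omega
  have hnR : (0:ℝ) < n := by exact_mod_cast hn
  -- the direction along which the loss is a degree-2M polynomial
  set e : EuclideanSpace ℝ (DlnVars H M) := WithLp.toLp 2 (fun v : DlnVars H M =>
    (if v.2.1.1 = 0 then (1:ℝ) else 0) *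
      (if v.1.1 = 0 then (if v.2.2.1 = j₀.1 then 1 else 0)
        else (if v.2.2.1 = 0 then 1 else 0))) with hedef
  have he : ∀ v : DlnVars H M, e v = (if v.2.1.1 = 0 then 1 else 0) *
      (if v.1.1 = 0 then (if v.2.2.1 = j₀.1 then 1 else 0)
        else (if v.2.2.1 = 0 then 1 else 0)) := fun v => rfl
  set C2 : ℝ := (1 / (n : ℝ)) * ∑ k, ∑ i : Fin (H M),
      ((if (i : ℕ) = 0 then (1:ℝ) else 0) * X k j₀) ^ 2 with hC2def
  set C1 : ℝ := (1 / (n : ℝ)) * ∑ k, ∑ i : Fin (H M),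
      (-2 * Y k i * ((if (i : ℕ) = 0 then (1:ℝ) else 0) * X k j₀)) with hC1def
  set C0 : ℝ := (1 / (n : ℝ)) * ∑ k, ∑ i : Fin (H M), (Y k i) ^ 2 with hC0def
  have hloss : ∀ t : ℝ, dlnEmpLoss M H n X Y (t • e)
      = C2 * t ^ (2 * M) + C1 * t ^ M + 0 * t ^ 2 + 0 * t + C0 :=
    fun t => dlnEmpLoss_line M hM1 H hH n X Y j₀ e he t
  -- positivity of the leading coefficient
  have hC2pos : 0 < C2 := by
    have hterm : ∀ k : Fin n, (0:ℝ) ≤ ∑ i : Fin (H M),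
        ((if (i : ℕ) = 0 then (1:ℝ) else 0) * X k j₀) ^ 2 :=
      fun k => Finset.sum_nonneg fun i _ => sq_nonneg _
    have hx2 : 0 < (X k₀ j₀) ^ 2 :=
      (sq_nonneg _).lt_of_ne (Ne.symm (pow_ne_zero 2 hj₀'))
    have hi0 : 0 < ∑ i : Fin (H M), ((if (i : ℕ) = 0 then (1:ℝ) else 0) * X k₀ j₀) ^ 2 := by
      have hle := Finset.single_le_sum
        (f := fun i : Fin (H M) => ((if (i : ℕ) = 0 then (1:ℝ) else 0) * X k₀ j₀) ^ 2)
        (fun i _ => sq_nonneg _) (Finset.mem_univ (⟨0, hH M le_rfl⟩ : Fin (H M)))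
      beta_reduce at hle
      have h00 : ((if (((⟨0, hH M le_rfl⟩ : Fin (H M)) : Fin (H M)) : ℕ) = 0
          then (1:ℝ) else 0) * X k₀ j₀) ^ 2 = (X k₀ j₀) ^ 2 := by norm_num
      rw [h00] at hle
      linarith
    have hsum : 0 < ∑ k, ∑ i : Fin (H M),
        ((if (i : ℕ) = 0 then (1:ℝ) else 0) * X k j₀) ^ 2 := by
      have hle := Finset.single_le_sum
        (f := fun k : Fin n => ∑ i : Fin (H M),
          ((if (i : ℕ) = 0 then (1:ℝ) else 0) * X k j₀) ^ 2)
        (fun k _ => hterm k) (Finset.mem_univ k₀)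
      linarith
    rw [hC2def]
    positivity
  -- the log posterior along the line
  have hpost : ∀ t : ℝ, dlnLogPost M H n X Y β γ wμ (t • e)
      = (-((n : ℝ) * β) * C2) * t ^ (2 * M) + (-((n : ℝ) * β) * C1) * t ^ M
        + (-(γ / 2) * ‖e‖ ^ 2) * t ^ 2 + (γ * (inner ℝ e wμ : ℝ)) * t
        + (-((n : ℝ) * β) * C0 - (γ / 2) * ‖wμ‖ ^ 2) := by
    intro t
    unfold dlnLogPost
    rw [hloss t]
    have hns : ‖t • e - wμ‖ ^ 2
        = ‖e‖ ^ 2 * t ^ 2 - (2 * (inner ℝ e wμ : ℝ)) * t + ‖wμ‖ ^ 2 := by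
      rw [norm_sub_sq_real, norm_smul, real_inner_smul_left, mul_pow,
        Real.norm_eq_abs, sq_abs]
      ring
    rw [hns]
    ring
  have haneg : -((n : ℝ) * β) * C2 ≠ 0 := by
    have hpos : 0 < (n : ℝ) * β * C2 := mul_pos (mul_pos hnR hβ) hC2pos
    intro hcontra
    rw [neg_mul] at hcontra
    nlinarith
  constructor
  · exact dln_not_lip _ (dlnLogPost_diff M H n X Y β γ wμ) e M hM
      (-((n : ℝ) * β) * C2) (-((n : ℝ) * β) * C1) (-(γ / 2) * ‖e‖ ^ 2)
      (γ * (inner ℝ e wμ : ℝ)) (-((n : ℝ) * β) * C0 - (γ / 2) * ‖wμ‖ ^ 2) haneg hpost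
  · exact dln_not_lip _ (dlnEmpLoss_diff M H n X Y) e M hM
      C2 C1 0 0 C0 (ne_of_gt hC2pos) hloss
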